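/- Let n ≥ 1 and let a_1, …, a_n ∈ ℝ^n be such that the matrix A with rows a_1, …, a_n satisfies det(A) ≠ 0. Then there exists a non-zero integral vector x ∈ ℤ^n \ {0} such that Σ_{i=1}^n |a_i·x| + |Σ_{i=1}^n a_i·x| ≤ ((n+1)! · |det(A)|)^{1/n}. -/

import Mathlib

open MeasureTheory Finset
open scoped ENNReal

lemma four_pow_le_succ_mul_centralBinom (n : ℕ) : 4 ^ n ≤ (n + 1) * Nat.centralBinom n := by
  induction n with
  | zero => simp
  | succ n ih =>
    have key := Nat.succ_mul_centralBinom_succ n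
    have hpos : 0 < n + 1 := n.succ_pos
    refine Nat.le_of_mul_le_mul_left ?_ hpos
    calc (n+1) * 4 ^ (n+1) = 4 * ((n+1) * 4^n) := by ring
    _ ≤ 4 * ((n+1) * ((n+1) * Nat.centralBinom n)) :=
        Nat.mul_le_mul_left _ (Nat.mul_le_mul_left _ ih)
    _ ≤ (n+2) * (2 * (2*n+1) * Nat.centralBinom n) := by nlinarith [Nat.centralBinom_pos n]
    _ = (n+2) * ((n+1) * Nat.centralBinom (n+1)) := by rw [key]
    _ = (n+1) * ((n+1+1) * Nat.centralBinom (n+1)) := by ring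

noncomputable def phi (n : ℕ) (a b : ℝ) : ℝ :=
  ∑ k ∈ Finset.range (n+1), (n.choose k : ℝ)^2 * a^k * b^(n-k) / (n.factorial : ℝ)

lemma phi_nonneg {n : ℕ} {a b : ℝ} (ha : 0 ≤ a) (hb : 0 ≤ b) : 0 ≤ phi n a b := by
  refine Finset.sum_nonneg fun k _ => ?_
  positivity

lemma sum_sq_choose (n : ℕ) : ∑ k ∈ Finset.range (n+1), (n.choose k)^2 = Nat.centralBinom n := by
  rw [Nat.centralBinom_eq_two_mul_choose, two_mul, Nat.add_choose_eq,
    Finset.Nat.sum_antidiagonal_eq_sum_range_succ_mk]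
  refine (Finset.sum_congr rfl fun k hk => ?_).symm
  rw [Finset.mem_range] at hk
  simp only [sq]
  rw [Nat.choose_symm (by omega : k ≤ n)]

lemma term_identity (n k : ℕ) (hk : k < n) (a b : ℝ) :
    (n.choose (k+1) : ℝ)^2 * a^(k+1) / n.factorial * (b^(n-k) / ((n:ℝ) - k))
      + (n.choose k : ℝ)^2 * b^(n-k) / n.factorial * (a^(k+1) / ((k:ℝ)+1))
      = ((n+1).choose (k+1) : ℝ)^2 * a^(k+1) * b^(n-k) / ((n+1).factorial : ℝ) := by
  have hq : (0:ℝ) < (n:ℝ) - k := by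
    have : (k:ℝ) < n := by exact_mod_cast hk
    linarith
  have hfac : ((n.factorial : ℝ)) ≠ 0 := by positivity
  have h0 : ((n:ℝ)+1) * (n.choose k : ℝ) = ((n+1).choose (k+1) : ℝ) * ((k:ℝ)+1) := by
    exact_mod_cast congrArg (Nat.cast : ℕ → ℝ) (Nat.add_one_mul_choose_eq n k)
  have hpascal : ((n+1).choose (k+1) : ℝ) = (n.choose k : ℝ) + (n.choose (k+1) : ℝ) := by
    exact_mod_cast congrArg (Nat.cast : ℕ → ℝ) (Nat.choose_succ_succ n k)
  have hn1 : ((n:ℝ)+1) ≠ 0 := by positivity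
  have hk1 : ((k:ℝ)+1) ≠ 0 := by positivity
  have ec0 : (n.choose k : ℝ) = ((k:ℝ)+1) * ((n+1).choose (k+1) : ℝ) / ((n:ℝ)+1) := by
    field_simp; linarith [h0]
  have ec1 : (n.choose (k+1) : ℝ) = ((n:ℝ)-k) * ((n+1).choose (k+1) : ℝ) / ((n:ℝ)+1) := by
    rw [eq_div_iff hn1]
    linear_combination (-((n:ℝ)+1)) * hpascal - h0
  have hfs : (((n+1).factorial : ℝ)) = ((n:ℝ)+1) * (n.factorial : ℝ) := by
    rw [Nat.factorial_succ]; push_cast; ring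
  rw [ec0, ec1, hfs]
  field_simp
  ring

lemma phi_identity (n : ℕ) (a b : ℝ) :
    (∑ k ∈ Finset.range (n+1), (n.choose k:ℝ)^2 * a^k / n.factorial * (b^(n-k+1)/((n:ℝ)-k+1)))
    + (∑ k ∈ Finset.range (n+1), (n.choose k:ℝ)^2 * b^(n-k) / n.factorial * (a^(k+1)/((k:ℝ)+1)))
    = phi (n+1) a b := by
  unfold phi
  rw [Finset.sum_range_succ' (fun k => (n.choose k:ℝ)^2 * a^k / n.factorial * (b^(n-k+1)/((n:ℝ)-k+1))) n,
      Finset.sum_range_succ (fun k => (n.choose k:ℝ)^2 * b^(n-k) / n.factorial * (a^(k+1)/((k:ℝ)+1))) n,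
      Finset.sum_range_succ' (fun j => ((n+1).choose j:ℝ)^2 * a^j * b^(n+1-j) / ((n+1).factorial:ℝ)) (n+1),
      Finset.sum_range_succ (fun j => ((n+1).choose (j+1):ℝ)^2 * a^(j+1) * b^(n+1-(j+1)) / ((n+1).factorial:ℝ)) n]
  have hfs : (((n+1).factorial : ℝ)) = ((n:ℝ)+1) * (n.factorial : ℝ) := by
    rw [Nat.factorial_succ]; push_cast; ring
  have hfac : ((n.factorial : ℝ)) ≠ 0 := by positivity
  have hn1 : ((n:ℝ)+1) ≠ 0 := by positivity
  have h0 : (n.choose 0:ℝ)^2 * a^0 / n.factorial * (b^(n-0+1)/((n:ℝ)-(0:ℕ)+1))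
      = ((n+1).choose 0:ℝ)^2 * a^0 * b^(n+1-0) / ((n+1).factorial:ℝ) := by
    simp only [Nat.choose_zero_right, Nat.sub_zero, hfs]
    push_cast
    field_simp
    ring
  have hn : (n.choose n:ℝ)^2 * b^(n-n) / n.factorial * (a^(n+1)/((n:ℝ)+1))
      = ((n+1).choose (n+1):ℝ)^2 * a^(n+1) * b^(n+1-(n+1)) / ((n+1).factorial:ℝ) := by
    simp only [Nat.choose_self, Nat.sub_self, hfs]
    push_cast
    field_simp
  have hmid : (∑ k ∈ Finset.range n, (n.choose (k+1):ℝ)^2 * a^(k+1) / n.factorial * (b^(n-(k+1)+1)/((n:ℝ)-(↑(k+1):ℝ)+1)))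
      + (∑ k ∈ Finset.range n, (n.choose k:ℝ)^2 * b^(n-k) / n.factorial * (a^(k+1)/((k:ℝ)+1)))
      = ∑ k ∈ Finset.range n, ((n+1).choose (k+1):ℝ)^2 * a^(k+1) * b^(n+1-(k+1)) / ((n+1).factorial:ℝ) := by
    rw [← Finset.sum_add_distrib]
    refine Finset.sum_congr rfl fun k hk => ?_
    rw [Finset.mem_range] at hk
    have e1 : n - (k+1) + 1 = n - k := by omega
    have e2 : n + 1 - (k+1) = n - k := by omega
    rw [e1, e2]
    have e3 : (n:ℝ) - (↑(k+1):ℝ) + 1 = (n:ℝ) - k := by push_cast; ring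
    rw [e3]
    exact term_identity n k hk a b
  linarith [hmid]

def SS (n : ℕ) (a b : ℝ) : Set (Fin n → ℝ) :=
  {y | (∑ i, max (y i) 0) ≤ a ∧ (∑ i, max (-(y i)) 0) ≤ b}

lemma isClosed_SS (n : ℕ) (a b : ℝ) : IsClosed (SS n a b) := by
  apply IsClosed.inter
  · exact isClosed_le (continuous_finset_sum _ fun i _ =>
      ((continuous_apply i).max continuous_const)) continuous_const
  · exact isClosed_le (continuous_finset_sum _ fun i _ =>
      ((continuous_apply i).neg.max continuous_const)) continuous_const

lemma SS_empty_left {n : ℕ} {a b : ℝ} (ha : a < 0) : SS n a b = ∅ := by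
  ext y
  simp only [SS, Set.mem_setOf_eq, Set.mem_empty_iff_false, iff_false, not_and]
  intro h
  exact absurd (le_trans (Finset.sum_nonneg fun i _ => le_max_right _ _) h) (not_le.mpr ha)

lemma SS_empty_right {n : ℕ} {a b : ℝ} (hb : b < 0) : SS n a b = ∅ := by
  ext y
  simp only [SS, Set.mem_setOf_eq, Set.mem_empty_iff_false, iff_false, not_and]
  intro _ h
  exact absurd (le_trans (Finset.sum_nonneg fun i _ => le_max_right _ _) h) (not_le.mpr hb)

lemma volume_SS (n : ℕ) : ∀ a b : ℝ, 0 ≤ a → 0 ≤ b →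
    volume (SS n a b) = ENNReal.ofReal (phi n a b) := by
  induction n with
  | zero =>
    intro a b ha hb
    have h1 : SS 0 a b = Set.univ := by
      ext y
      simp [SS, ha, hb]
    rw [h1, phi]
    simp [volume_pi, Measure.pi_univ]
  | succ n ih =>
    intro a b ha hb
    classical
    set T : Set (ℝ × (Fin n → ℝ)) :=
      {p | max p.1 0 + ∑ i, max (p.2 i) 0 ≤ a ∧ max (-p.1) 0 + ∑ i, max (-(p.2 i)) 0 ≤ b} with hTdef
    have hTclosed : IsClosed T := by
      apply IsClosed.inter
      · exact isClosed_le (Continuous.add (continuous_fst.max continuous_const)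
          (continuous_finset_sum _ fun i _ =>
            ((continuous_apply i).comp continuous_snd).max continuous_const)) continuous_const
      · exact isClosed_le (Continuous.add (continuous_fst.neg.max continuous_const)
          (continuous_finset_sum _ fun i _ =>
            ((continuous_apply i).comp continuous_snd).neg.max continuous_const)) continuous_const
    have hTm : MeasurableSet T := hTclosed.measurableSet
    have hmp := MeasureTheory.volume_preserving_piFinSuccAbove (fun _ : Fin (n+1) => ℝ) 0
    have hpre : SS (n+1) a b = (MeasurableEquiv.piFinSuccAbove (fun _ : Fin (n+1) => ℝ) 0) ⁻¹' T := by
      ext y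
      simp only [SS, Set.mem_setOf_eq, Set.mem_preimage, hTdef,
        MeasurableEquiv.piFinSuccAbove_apply, Fin.removeNth_zero]
      rw [Fin.sum_univ_succ (f := fun i => max (y i) 0),
        Fin.sum_univ_succ (f := fun i => max (-(y i)) 0)]
      rfl
    have step1 : volume (SS (n+1) a b) = (volume : Measure (ℝ × (Fin n → ℝ))) T := by
      rw [hpre]
      exact hmp.measure_preimage hTm.nullMeasurableSet
    have step2 : (volume : Measure (ℝ × (Fin n → ℝ))) T
        = ∫⁻ t : ℝ, volume (SS n (a - max t 0) (b - max (-t) 0)) := by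
      rw [MeasureTheory.Measure.volume_eq_prod, Measure.prod_apply hTm]
      refine lintegral_congr fun t => ?_
      congr 1
      ext y
      simp only [hTdef, Set.mem_setOf_eq, Set.mem_preimage, SS]
      constructor
      · rintro ⟨h1, h2⟩; exact ⟨by linarith, by linarith⟩
      · rintro ⟨h1, h2⟩; exact ⟨by linarith, by linarith⟩
    set F : ℝ → ℝ≥0∞ := fun t => volume (SS n (a - max t 0) (b - max (-t) 0)) with hF
    have hFzero : ∀ t, t ∉ Set.Icc (-b) a → F t = 0 := by
      intro t ht
      rw [Set.mem_Icc, not_and_or] at ht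
      rcases ht with ht | ht
      · rw [hF]
        have : b - max (-t) 0 < 0 := by
          rw [not_le] at ht
          have : max (-t) 0 = -t := max_eq_left (by linarith)
          rw [this]; linarith
        simp [SS_empty_right this]
      · rw [hF]
        have : a - max t 0 < 0 := by
          rw [not_le] at ht
          have : max t 0 = t := max_eq_left (by linarith)
          rw [this]; linarith
        simp [SS_empty_left this]
    have step3 : ∫⁻ t : ℝ, F t = ∫⁻ t in Set.Icc (-b) a, F t := by
      rw [← lintegral_indicator measurableSet_Icc]
      refine lintegral_congr fun t => ?_
      rw [Set.indicator_apply]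
      split_ifs with h
      · rfl
      · exact hFzero t h
    have hsplit : Set.Icc (-b) a = Set.Icc (-b) 0 ∪ Set.Ioc 0 a :=
      (Set.Icc_union_Ioc_eq_Icc (by linarith) ha).symm
    have hdisj : Disjoint (Set.Icc (-b) (0:ℝ)) (Set.Ioc 0 a) := by
      rw [Set.disjoint_left]
      rintro t ⟨_, h1⟩ ⟨h2, _⟩
      linarith
    have step4 : ∫⁻ t in Set.Icc (-b) a, F t
        = (∫⁻ t in Set.Icc (-b) 0, F t) + ∫⁻ t in Set.Ioc 0 a, F t := by
      rw [hsplit, lintegral_union measurableSet_Ioc hdisj]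
    -- Piece A : t ∈ Icc (-b) 0
    have hA : ∫⁻ t in Set.Icc (-b) 0, F t
        = ∫⁻ t in Set.Icc (-b) 0, ENNReal.ofReal (phi n a (b + t)) := by
      refine setLIntegral_congr_fun measurableSet_Icc (fun t ht => ?_)
      rw [Set.mem_Icc] at ht
      have h1 : max t 0 = 0 := max_eq_right ht.2
      have h2 : max (-t) 0 = -t := max_eq_left (by linarith [ht.2])
      show volume (SS n (a - max t 0) (b - max (-t) 0)) = _
      rw [h1, h2, sub_zero, sub_neg_eq_add]
      exact ih a (b + t) ha (by linarith [ht.1])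
    have hcontA : Continuous fun t : ℝ => phi n a (b + t) := by
      unfold phi
      refine continuous_finset_sum _ fun k _ => ?_
      exact ((continuous_const.mul ((continuous_const.add continuous_id).pow _)).div_const _)
    have hintA : IntegrableOn (fun t : ℝ => phi n a (b + t)) (Set.Icc (-b) 0) :=
      hcontA.integrableOn_Icc
    have hnnA : 0 ≤ᵐ[volume.restrict (Set.Icc (-b) 0)] fun t : ℝ => phi n a (b + t) := by
      filter_upwards [ae_restrict_mem measurableSet_Icc] with t ht
      exact phi_nonneg ha (by linarith [ht.1])
    have hA2 : ∫⁻ t in Set.Icc (-b) 0, ENNReal.ofReal (phi n a (b + t))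
        = ENNReal.ofReal (∫ t in Set.Icc (-b) 0, phi n a (b + t)) :=
      (MeasureTheory.ofReal_integral_eq_lintegral_ofReal hintA hnnA).symm
    have hA3 : ∫ t in Set.Icc (-b) 0, phi n a (b + t)
        = ∑ k ∈ Finset.range (n+1),
            (n.choose k:ℝ)^2 * a^k / n.factorial * (b^(n-k+1)/((n:ℝ)-k+1)) := by
      rw [MeasureTheory.integral_Icc_eq_integral_Ioc,
        ← intervalIntegral.integral_of_le (by linarith : (-b) ≤ 0)]
      unfold phi
      rw [intervalIntegral.integral_finset_sum]
      · refine Finset.sum_congr rfl fun k hk => ?_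
        rw [Finset.mem_range] at hk
        have hrw : ∀ t : ℝ, (n.choose k:ℝ)^2 * a^k * (b+t)^(n-k) / n.factorial
            = ((n.choose k:ℝ)^2 * a^k / n.factorial) * (t + b)^(n-k) := by intro t; ring
        simp_rw [hrw]
        rw [intervalIntegral.integral_const_mul,
          intervalIntegral.integral_comp_add_right (fun u => u ^ (n-k)) b,
          neg_add_cancel, zero_add, integral_pow, zero_pow (by omega), sub_zero]
        rw [Nat.cast_sub (by omega : k ≤ n)]
      · intro k hk
        apply Continuous.intervalIntegrable
        exact ((continuous_const.mul ((continuous_const.add continuous_id).pow _)).div_const _)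
    -- Piece B : t ∈ Ioc 0 a
    have hB : ∫⁻ t in Set.Ioc 0 a, F t
        = ∫⁻ t in Set.Ioc 0 a, ENNReal.ofReal (phi n (a - t) b) := by
      refine setLIntegral_congr_fun measurableSet_Ioc (fun t ht => ?_)
      rw [Set.mem_Ioc] at ht
      have h1 : max t 0 = t := max_eq_left (le_of_lt ht.1)
      have h2 : max (-t) 0 = 0 := max_eq_right (by linarith [ht.1])
      show volume (SS n (a - max t 0) (b - max (-t) 0)) = _
      rw [h1, h2, sub_zero]
      exact ih (a - t) b (by linarith [ht.2]) hb
    have hcontB : Continuous fun t : ℝ => phi n (a - t) b := by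
      unfold phi
      refine continuous_finset_sum _ fun k _ => ?_
      refine Continuous.div_const ?_ _
      exact (continuous_const.mul ((continuous_const.sub continuous_id).pow _)).mul continuous_const
    have hintB : IntegrableOn (fun t : ℝ => phi n (a - t) b) (Set.Ioc 0 a) :=
      (hcontB.integrableOn_Icc).mono_set Set.Ioc_subset_Icc_self
    have hnnB : 0 ≤ᵐ[volume.restrict (Set.Ioc 0 a)] fun t : ℝ => phi n (a - t) b := by
      filter_upwards [ae_restrict_mem measurableSet_Ioc] with t ht
      exact phi_nonneg (by linarith [ht.2]) hb
    have hB2 : ∫⁻ t in Set.Ioc 0 a, ENNReal.ofReal (phi n (a - t) b)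
        = ENNReal.ofReal (∫ t in Set.Ioc 0 a, phi n (a - t) b) :=
      (MeasureTheory.ofReal_integral_eq_lintegral_ofReal hintB hnnB).symm
    have hB3 : ∫ t in Set.Ioc 0 a, phi n (a - t) b
        = ∑ k ∈ Finset.range (n+1),
            (n.choose k:ℝ)^2 * b^(n-k) / n.factorial * (a^(k+1)/((k:ℝ)+1)) := by
      rw [← intervalIntegral.integral_of_le ha]
      unfold phi
      rw [intervalIntegral.integral_finset_sum]
      · refine Finset.sum_congr rfl fun k hk => ?_
        have hrw : ∀ t : ℝ, (n.choose k:ℝ)^2 * (a-t)^k * b^(n-k) / n.factorial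
            = ((n.choose k:ℝ)^2 * b^(n-k) / n.factorial) * (a - t)^k := by intro t; ring
        simp_rw [hrw]
        rw [intervalIntegral.integral_const_mul,
          intervalIntegral.integral_comp_sub_left (fun u => u ^ k) a,
          sub_self, sub_zero, integral_pow, zero_pow (by omega), sub_zero]
      · intro k hk
        apply Continuous.intervalIntegrable
        exact ((continuous_const.mul ((continuous_const.sub continuous_id).pow _)).mul
          continuous_const).div_const _
    -- nonnegativity of the two sums
    have hAnn : 0 ≤ ∑ k ∈ Finset.range (n+1),
        (n.choose k:ℝ)^2 * a^k / n.factorial * (b^(n-k+1)/((n:ℝ)-k+1)) := by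
      refine Finset.sum_nonneg fun k hk => ?_
      rw [Finset.mem_range] at hk
      have hkn : (k:ℝ) ≤ n := by exact_mod_cast (by omega : k ≤ n)
      refine mul_nonneg (by positivity) (div_nonneg (by positivity) (by linarith))
    have hBnn : 0 ≤ ∑ k ∈ Finset.range (n+1),
        (n.choose k:ℝ)^2 * b^(n-k) / n.factorial * (a^(k+1)/((k:ℝ)+1)) := by
      refine Finset.sum_nonneg fun k hk => ?_
      refine mul_nonneg (by positivity) (div_nonneg (by positivity) (by positivity))
    rw [step1, step2, step3, step4, hA, hA2, hA3, hB, hB2, hB3,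
      ← ENNReal.ofReal_add hAnn hBnn, phi_identity]

lemma phi_diag (n : ℕ) (a : ℝ) :
    phi n a a = (Nat.centralBinom n : ℝ) * a^n / n.factorial := by
  unfold phi
  have hterm : ∀ k ∈ Finset.range (n+1),
      (n.choose k:ℝ)^2 * a^k * a^(n-k) / n.factorial
        = (n.choose k:ℝ)^2 * a^n / n.factorial := by
    intro k hk
    rw [Finset.mem_range] at hk
    rw [mul_assoc, ← pow_add, show k + (n - k) = n from by omega]
  rw [Finset.sum_congr rfl hterm, ← Finset.sum_div, ← Finset.sum_mul]
  congr 2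
  rw [← sum_sq_choose n]
  push_cast
  rfl

lemma abs_set_eq_SS (n : ℕ) (t : ℝ) :
    {w : Fin n → ℝ | (∑ i, |w i|) + |∑ i, w i| ≤ t} = SS n (t/2) (t/2) := by
  ext w
  have hPN : (∑ i, |w i|) = (∑ i, max (w i) 0) + ∑ i, max (-(w i)) 0 := by
    rw [← Finset.sum_add_distrib]
    exact Finset.sum_congr rfl fun i _ => (max_zero_add_max_neg_zero_eq_abs_self (w i)).symm
  have hsum : (∑ i, w i) = (∑ i, max (w i) 0) - ∑ i, max (-(w i)) 0 := by
    rw [← Finset.sum_sub_distrib]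
    exact Finset.sum_congr rfl fun i _ => (max_zero_sub_max_neg_zero_eq_self (w i)).symm
  simp only [Set.mem_setOf_eq, SS, hPN, hsum]
  set P := ∑ i, max (w i) 0
  set N := ∑ i, max (-(w i)) 0
  constructor
  · intro h
    have h1 : P - N ≤ |P - N| := le_abs_self _
    have h2 : -(P - N) ≤ |P - N| := neg_le_abs _
    exact ⟨by linarith, by linarith⟩
  · rintro ⟨h1, h2⟩
    rcases abs_cases (P - N) with ⟨he, _⟩ | ⟨he, _⟩ <;> rw [he] <;> linarith

lemma int_coords {n : ℕ} {y : Fin n → ℝ}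
    (hy : y ∈ Submodule.span ℤ (Set.range (Pi.basisFun ℝ (Fin n)))) :
    ∀ i, ∃ m : ℤ, y i = m := by
  induction hy using Submodule.span_induction with
  | mem x hx =>
    obtain ⟨j, rfl⟩ := hx
    intro i
    by_cases h : i = j
    · exact ⟨1, by simp [Pi.basisFun_apply, Pi.single_apply, h]⟩
    · exact ⟨0, by simp [Pi.basisFun_apply, Pi.single_apply, h]⟩
  | zero => exact fun i => ⟨0, by simp⟩
  | add x y _ _ hx hy =>
    intro i
    obtain ⟨m1, h1⟩ := hx i
    obtain ⟨m2, h2⟩ := hy i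
    exact ⟨m1 + m2, by simp [h1, h2]⟩
  | smul z x _ hx =>
    intro i
    obtain ⟨m, h⟩ := hx i
    refine ⟨z * m, ?_⟩
    have : (z • x) i = (z:ℝ) * x i := by simp [zsmul_eq_mul]
    rw [this, h]; push_cast; ring

/-- **Linear form theorem in general dimension.**
Given `n ≥ 1` linear homogeneous forms `ℓ_i(x) = a_i·x` whose coefficient matrix `A`
(with rows `a_1, …, a_n`) has nonzero determinant, there exists a nonzero integral
vector `x` with `∑ |ℓ_i(x)| + |∑ ℓ_i(x)| ≤ ((n+1)!·|det A|)^{1/n}`. -/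
theorem linear_forms_general (n : ℕ) (hn : 1 ≤ n) (A : Matrix (Fin n) (Fin n) ℝ)
    (hA : A.det ≠ 0) :
    ∃ x : Fin n → ℤ, x ≠ 0 ∧
      (∑ i, |∑ j, A i j * (x j : ℝ)|) + |∑ i, ∑ j, A i j * (x j : ℝ)| ≤
        ((Nat.factorial (n + 1) : ℝ) * |A.det|) ^ ((1 : ℝ) / n) := by
  classical
  haveI : Nonempty (Fin n) := ⟨⟨0, hn⟩⟩
  set t : ℝ := ((Nat.factorial (n + 1) : ℝ) * |A.det|) ^ ((1 : ℝ) / n) with ht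
  have hdet : (0:ℝ) < |A.det| := abs_pos.mpr hA
  have hbase : (0:ℝ) < (Nat.factorial (n+1) : ℝ) * |A.det| := by positivity
  have htpos : 0 < t := Real.rpow_pos_of_pos hbase _
  have hncast : ((n:ℝ)) ≠ 0 := Nat.cast_ne_zero.mpr (by omega)
  have htn : t ^ n = (Nat.factorial (n+1) : ℝ) * |A.det| := by
    rw [ht, ← Real.rpow_natCast (((Nat.factorial (n + 1) : ℝ) * |A.det|) ^ ((1 : ℝ) / n)) n,
      ← Real.rpow_mul hbase.le, one_div, inv_mul_cancel₀ hncast, Real.rpow_one]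
  set C : Set (Fin n → ℝ) := {w | (∑ i, |w i|) + |∑ i, w i| ≤ t} with hC
  have hCSS : C = SS n (t/2) (t/2) := abs_set_eq_SS n t
  have hvolC : volume C = ENNReal.ofReal ((Nat.centralBinom n : ℝ) * (t/2)^n / n.factorial) := by
    rw [hCSS, volume_SS n _ _ (by positivity) (by positivity), phi_diag]
  have hCclosed : IsClosed C := by rw [hCSS]; exact isClosed_SS n _ _
  have hCbdd : Bornology.IsBounded C := by
    apply (Metric.isBounded_closedBall (x := (0 : Fin n → ℝ)) (r := t)).subset
    intro w hw
    rw [Metric.mem_closedBall, dist_zero_right]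
    rw [pi_norm_le_iff_of_nonneg htpos.le]
    intro i
    rw [Real.norm_eq_abs]
    have h1 : |w i| ≤ ∑ j, |w j| :=
      Finset.single_le_sum (f := fun j => |w j|) (fun j _ => abs_nonneg _) (Finset.mem_univ i)
    have h2 : (∑ j, |w j|) + |∑ j, w j| ≤ t := hw
    have h3 : (0:ℝ) ≤ |∑ j, w j| := abs_nonneg _
    linarith
  have hCcompact : IsCompact C := Metric.isCompact_of_isClosed_isBounded hCclosed hCbdd
  have hCsymm : ∀ w ∈ C, -w ∈ C := by
    intro w hw
    simp only [hC, Set.mem_setOf_eq] at *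
    have e1 : (∑ i, |(-w) i|) = ∑ i, |w i| :=
      Finset.sum_congr rfl fun i _ => by rw [Pi.neg_apply, abs_neg]
    have e2 : |∑ i, (-w) i| = |∑ i, w i| := by
      rw [show (∑ i, (-w) i) = -(∑ i, w i) by simp [Finset.sum_neg_distrib], abs_neg]
    rw [e1, e2]; exact hw
  have hCconv : Convex ℝ C := by
    intro x hx y hy p q hp hq hpq
    simp only [hC, Set.mem_setOf_eq] at *
    have h1 : ∀ i, |(p • x + q • y) i| ≤ p * |x i| + q * |y i| := fun i => by
      simp only [Pi.add_apply, Pi.smul_apply, smul_eq_mul]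
      calc |p * x i + q * y i| ≤ |p * x i| + |q * y i| := abs_add_le _ _
        _ = p * |x i| + q * |y i| := by
            rw [abs_mul, abs_mul, abs_of_nonneg hp, abs_of_nonneg hq]
    have hsum : (∑ i, (p • x + q • y) i) = p * (∑ i, x i) + q * (∑ i, y i) := by
      simp [Finset.sum_add_distrib, Finset.mul_sum]
    have h2 : |∑ i, (p • x + q • y) i| ≤ p * |∑ i, x i| + q * |∑ i, y i| := by
      rw [hsum]
      calc |p * (∑ i, x i) + q * (∑ i, y i)| ≤ |p * ∑ i, x i| + |q * ∑ i, y i| := abs_add_le _ _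
        _ = _ := by rw [abs_mul, abs_mul, abs_of_nonneg hp, abs_of_nonneg hq]
    calc (∑ i, |(p • x + q • y) i|) + |∑ i, (p • x + q • y) i|
        ≤ (∑ i, (p * |x i| + q * |y i|)) + (p * |∑ i, x i| + q * |∑ i, y i|) :=
          add_le_add (Finset.sum_le_sum fun i _ => h1 i) h2
      _ = p * ((∑ i, |x i|) + |∑ i, x i|) + q * ((∑ i, |y i|) + |∑ i, y i|) := by
          rw [Finset.sum_add_distrib, ← Finset.mul_sum, ← Finset.mul_sum]
          ring
      _ ≤ p * t + q * t :=
          add_le_add (mul_le_mul_of_nonneg_left hx hp) (mul_le_mul_of_nonneg_left hy hq)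
      _ = t := by rw [← add_mul, hpq, one_mul]
  -- the preimage body
  set f : (Fin n → ℝ) →ₗ[ℝ] (Fin n → ℝ) := Matrix.toLin' A with hf
  have hfdet : LinearMap.det f = A.det := LinearMap.det_toLin' A
  have hfdet0 : LinearMap.det f ≠ 0 := by rw [hfdet]; exact hA
  set s : Set (Fin n → ℝ) := f ⁻¹' C with hs
  have hvols : volume s = ENNReal.ofReal |A.det|⁻¹ * volume C := by
    rw [hs, MeasureTheory.Measure.addHaar_preimage_linearMap volume hfdet0, hfdet, abs_inv]
  have hsymm : ∀ x ∈ s, -x ∈ s := by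
    intro x hx
    rw [hs, Set.mem_preimage, map_neg]
    exact hCsymm _ hx
  have hconv : Convex ℝ s := hCconv.linear_preimage f
  -- compactness of s
  haveI : Invertible A := A.invertibleOfIsUnitDet (isUnit_iff_ne_zero.mpr hA)
  set e : (Fin n → ℝ) ≃ₗ[ℝ] (Fin n → ℝ) := A.toLinearEquiv' ‹Invertible A› with he
  have hecoe : ∀ v, e v = f v := fun v => by
    rw [he, hf]
    rfl
  have hscompact : IsCompact s := by
    have himg : IsCompact ((e.symm : (Fin n → ℝ) →ₗ[ℝ] (Fin n → ℝ)) '' C) :=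
      hCcompact.image (LinearMap.continuous_of_finiteDimensional _)
    have : ((e.symm : (Fin n → ℝ) →ₗ[ℝ] (Fin n → ℝ)) '' C) = s := by
      ext x
      constructor
      · rintro ⟨w, hw, rfl⟩
        rw [hs, Set.mem_preimage]
        have : f ((e.symm : (Fin n → ℝ) →ₗ[ℝ] (Fin n → ℝ)) w) = w := by
          rw [← hecoe]
          exact e.apply_symm_apply w
        rw [this]; exact hw
      · intro hx
        exact ⟨f x, hx, by rw [← hecoe]; exact e.symm_apply_apply x⟩
    rwa [this] at himg
  -- volume inequality
  have hkey : (2:ℝ)^n * |A.det| ≤ (Nat.centralBinom n : ℝ) * (t/2)^n / n.factorial := by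
    have h4 : (4:ℝ)^n ≤ ((n:ℝ)+1) * Nat.centralBinom n := by
      exact_mod_cast four_pow_le_succ_mul_centralBinom n
    have hfacs : ((Nat.factorial (n+1) : ℝ)) = ((n:ℝ)+1) * n.factorial := by
      rw [Nat.factorial_succ]; push_cast; ring
    have hfacpos : (0:ℝ) < n.factorial := by positivity
    rw [div_pow, htn, hfacs]
    have hrhs : (Nat.centralBinom n : ℝ) * ((((n:ℝ)+1) * n.factorial * |A.det|) / 2^n) / n.factorial
        = ((n:ℝ)+1) * Nat.centralBinom n * |A.det| / 2^n := by
      field_simp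
    rw [hrhs, le_div_iff₀ (by positivity : (0:ℝ) < 2^n)]
    have h44 : (2:ℝ)^n * (2:ℝ)^n = 4^n := by rw [← mul_pow]; norm_num
    calc (2:ℝ)^n * |A.det| * 2^n = (2^n * 2^n) * |A.det| := by ring
      _ = 4^n * |A.det| := by rw [h44]
      _ ≤ (((n:ℝ)+1) * Nat.centralBinom n) * |A.det| := mul_le_mul_of_nonneg_right h4 hdet.le
  have hfin : Module.finrank ℝ (Fin n → ℝ) = n := Module.finrank_fin_fun ℝ
  have hFvol : volume (ZSpan.fundamentalDomain (Pi.basisFun ℝ (Fin n))) = 1 := by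
    rw [ZSpan.fundamentalDomain_pi_basisFun]
    simp [volume_pi, Measure.pi_pi]
  have hfund := ZSpan.isAddFundamentalDomain' (Pi.basisFun ℝ (Fin n)) volume
  haveI : Countable (Submodule.span ℤ (Set.range (Pi.basisFun ℝ (Fin n)))).toAddSubgroup :=
    inferInstanceAs (Countable (Submodule.span ℤ (Set.range (Pi.basisFun ℝ (Fin n)))))
  have hmink : volume (ZSpan.fundamentalDomain (Pi.basisFun ℝ (Fin n)))
      * 2 ^ Module.finrank ℝ (Fin n → ℝ) ≤ volume s := by
    rw [hFvol, one_mul, hfin, hvols, hvolC]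
    have h2n : ((2:ℝ≥0∞))^n = ENNReal.ofReal ((2:ℝ)^n) := by
      rw [ENNReal.ofReal_pow (by norm_num : (0:ℝ) ≤ 2)]
      norm_num
    rw [h2n, ← ENNReal.ofReal_mul (by positivity)]
    refine ENNReal.ofReal_le_ofReal ?_
    have := mul_le_mul_of_nonneg_left hkey (by positivity : (0:ℝ) ≤ |A.det|⁻¹)
    calc (2:ℝ)^n = |A.det|⁻¹ * ((2:ℝ)^n * |A.det|) := by field_simp
      _ ≤ _ := this
  obtain ⟨x, hx0, hxs⟩ :=
    MeasureTheory.exists_ne_zero_mem_lattice_of_measure_mul_two_pow_le_measure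
      hfund hsymm hconv hscompact hmink
  have hxspan : (x : Fin n → ℝ) ∈ Submodule.span ℤ (Set.range (Pi.basisFun ℝ (Fin n))) :=
    x.2
  have hcoords := int_coords hxspan
  choose z hz using hcoords
  refine ⟨z, ?_, ?_⟩
  · intro hz0
    apply hx0
    have : (x : Fin n → ℝ) = 0 := by
      funext i
      rw [hz i, congrFun hz0 i]
      simp
    ext
    exact congrFun this _
  · have hmem : f (x : Fin n → ℝ) ∈ C := hxs
    rw [hC, Set.mem_setOf_eq] at hmem
    have happ : ∀ i, f (x : Fin n → ℝ) i = ∑ j, A i j * (z j : ℝ) := by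
      intro i
      rw [hf]
      rw [Matrix.toLin'_apply]
      simp only [Matrix.mulVec, dotProduct]
      exact Finset.sum_congr rfl fun j _ => by rw [hz j]
    have e1 : (∑ i, |∑ j, A i j * (z j : ℝ)|) = ∑ i, |f (x : Fin n → ℝ) i| :=
      Finset.sum_congr rfl fun i _ => by rw [happ i]
    have e2 : (∑ i, ∑ j, A i j * (z j : ℝ)) = ∑ i, f (x : Fin n → ℝ) i :=
      Finset.sum_congr rfl fun i _ => by rw [happ i]
    rw [e1, e2]
    exact hmem
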